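/- Let D be an integral domain with quotient field K, n a positive integer, and p ∈ D[X] a monic polynomial of degree n. Let f = g/d ∈ K[X] with g ∈ D[X] and d ∈ D \ {0}. Then f belongs to Int(Mₙᵖ(D), Mₙ(D)) if and only if g lies in the ideal of D[X] generated by d and p, i.e., g is divisible by p modulo dD[X]. -/

import Mathlib

open Polynomial

/-- `IntOn D K S` is the set of polynomials `f ∈ K[X]` that are integer-valued on the set
`S ⊆ Mₙ(D)`: for every `M ∈ S`, evaluating `f` at the image of `M` in `Mₙ(K)` yields a matrix
all of whose entries lie in (the image of) `D`. -/
def IntOn (D K : Type*) [CommRing D] [Field K] [Algebra D K] {n : ℕ}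
    (S : Set (Matrix (Fin n) (Fin n) D)) : Set (Polynomial K) :=
  {f | ∀ M ∈ S, ∀ i j, ∃ d : D,
    algebraMap D K d = (Polynomial.aeval (M.map (algebraMap D K)) f) i j}

section Aux

variable {D K : Type*} [CommRing D] [CommRing K] [Algebra D K] {n : ℕ}

/-- Mapping matrices entrywise commutes with polynomial evaluation. -/
lemma map_aeval_matrix (M : Matrix (Fin n) (Fin n) D) (g : D[X]) :
    (Polynomial.aeval M g).map (algebraMap D K)
      = Polynomial.aeval (M.map (algebraMap D K)) (g.map (algebraMap D K)) := by
  have h1 : M.map (algebraMap D K) = (Algebra.ofId D K).mapMatrix M := by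
    ext i j; simp [Algebra.ofId_apply]
  rw [h1, Polynomial.aeval_map_algebraMap,
    Polynomial.aeval_algHom_apply ((Algebra.ofId D K).mapMatrix) M g]
  ext i j; simp [Algebra.ofId_apply]

/-- The minimal polynomial of the root of a monic polynomial over a domain. -/
lemma minpoly_adjoinRoot {D : Type*} [CommRing D] [IsDomain D] {p : D[X]} (hp : p.Monic) :
    minpoly D (AdjoinRoot.root p) = p := by
  refine (minpoly.unique' D _ hp ?_ ?_).symm
  · rw [AdjoinRoot.aeval_eq, AdjoinRoot.mk_self]
  · intro q hq
    by_contra hcon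
    push_neg at hcon
    obtain ⟨hq0, hq1⟩ := hcon
    rw [AdjoinRoot.aeval_eq, AdjoinRoot.mk_eq_zero] at hq1
    exact absurd (Polynomial.degree_le_of_dvd hq1 hq0) (not_le_of_gt hq)

end Aux

/-- Let `D` be a domain with quotient field `K`, `n` positive, `p ∈ D[X]` monic
of degree `n`, and `f = g/d ∈ K[X]` with `g ∈ D[X]`, `d ∈ D \ {0}`.  Then
`f ∈ Int(Mₙᵖ(D), Mₙ(D))` iff `g` lies in the ideal of `D[X]` generated by `d` and `p`,
i.e. `g` is divisible by `p` modulo `dD[X]`. -/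
theorem mem_intOn_charpoly_iff_mem_span (D K : Type*) [CommRing D] [IsDomain D] [Field K]
    [Algebra D K] [IsFractionRing D K] (n : ℕ) (hn : 0 < n) (p : D[X]) (hp : p.Monic)
    (hdeg : p.natDegree = n) (g : D[X]) (d : D) (hd : d ≠ 0) (f : K[X])
    (hf : f * C (algebraMap D K d) = g.map (algebraMap D K)) :
    f ∈ IntOn D K {M : Matrix (Fin n) (Fin n) D | M.charpoly = p} ↔
      g ∈ Ideal.span {Polynomial.C d, p} := by
  subst hdeg
  have hφ : Function.Injective (algebraMap D K) := IsFractionRing.injective D K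
  -- the key identity relating `f` and `g` on any matrix with entries in `D`
  have key : ∀ M : Matrix (Fin p.natDegree) (Fin p.natDegree) D,
      algebraMap D K d • Polynomial.aeval (M.map (algebraMap D K)) f
        = (Polynomial.aeval M g).map (algebraMap D K) := by
    intro M
    rw [map_aeval_matrix, ← hf, map_mul, aeval_C, ← Algebra.commutes, ← Algebra.smul_def]
  constructor
  · intro hF
    -- the companion-type matrix: left multiplication by the root on `D[X]/(p)`
    set b := AdjoinRoot.powerBasis' hp with hb
    set M : Matrix (Fin p.natDegree) (Fin p.natDegree) D :=
      Algebra.leftMulMatrix b.basis b.gen with hM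
    have hMS : M.charpoly = p := by
      rw [hM]
      exact (charpoly_leftMulMatrix b).trans (minpoly_adjoinRoot hp)
    -- entries of column 0 of `aeval M g` are the coefficients of `g %ₘ p`
    have hcol : ∀ i : Fin p.natDegree, (Polynomial.aeval M g) i ⟨0, hn⟩ = (g %ₘ p).coeff i := by
      intro i
      have h1 : Polynomial.aeval M g
          = Algebra.leftMulMatrix b.basis (Polynomial.aeval b.gen g) := by
        rw [hM]; exact Polynomial.aeval_algHom_apply _ b.gen g
      rw [h1]; refine (Algebra.leftMulMatrix_eq_repr_mul b.basis _ i ⟨0, hn⟩).trans ?_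
      have h2 : b.basis ⟨0, hn⟩ = 1 := by
        rw [b.basis_eq_pow]; simp
      rw [h2, mul_one]
      have h3 : Polynomial.aeval b.gen g = AdjoinRoot.mk p g := AdjoinRoot.aeval_eq g
      rw [h3]
      have := AdjoinRoot.powerBasisAux'_repr_apply_to_fun hp (AdjoinRoot.mk p g) i
      rw [AdjoinRoot.modByMonicHom_mk] at this
      exact this
    -- every coefficient of `g %ₘ p` is divisible by `d`
    have hdvd : Polynomial.C d ∣ g %ₘ p := by
      rw [Polynomial.C_dvd_iff_dvd_coeff]
      intro i
      by_cases hi : i < p.natDegree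
      · obtain ⟨c, hc⟩ := hF M hMS ⟨i, hi⟩ ⟨0, hn⟩
        refine ⟨c, ?_⟩
        apply hφ
        have := congrFun (congrFun (key M) ⟨i, hi⟩) ⟨0, hn⟩
        rw [Matrix.smul_apply, smul_eq_mul, ← hc, Matrix.map_apply] at this
        rw [← hcol ⟨i, hi⟩, map_mul, this]
      · have h0 : (g %ₘ p).coeff i = 0 := by
          by_cases hz : g %ₘ p = 0
          · simp [hz]
          · apply Polynomial.coeff_eq_zero_of_natDegree_lt
            have := Polynomial.natDegree_lt_natDegree hz (Polynomial.degree_modByMonic_lt g hp)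
            omega
        simp [h0]
    obtain ⟨u, hu⟩ := hdvd
    rw [Ideal.mem_span_pair]
    exact ⟨u, g /ₘ p, by rw [mul_comm u, ← hu, mul_comm (g /ₘ p) p,
      Polynomial.modByMonic_add_div g p]⟩
  · intro hg M hM i j
    obtain ⟨a, c, hac⟩ := Ideal.mem_span_pair.mp hg
    refine ⟨(Polynomial.aeval M a) i j, ?_⟩
    have haevp : Polynomial.aeval M p = 0 := by
      have hMp : M.charpoly = p := hM
      have h0 := Matrix.aeval_self_charpoly M
      rwa [hMp] at h0
    have h1 : Polynomial.aeval M g = d • Polynomial.aeval M a := by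
      rw [← hac, map_add, map_mul, map_mul, haevp, mul_zero, add_zero, aeval_C,
        ← Algebra.commutes, ← Algebra.smul_def]
    have h2 : algebraMap D K d • Polynomial.aeval (M.map (algebraMap D K)) f
        = algebraMap D K d • (Polynomial.aeval M a).map (algebraMap D K) := by
      rw [key M, h1]
      ext i' j'
      simp [Matrix.map_apply]
    have hdK : algebraMap D K d ≠ 0 := fun h => hd (hφ (by rw [h, map_zero]))
    have h3 := smul_right_injective (Matrix (Fin p.natDegree) (Fin p.natDegree) K) hdK h2
    have := congrFun (congrFun h3 i) j
    rw [Matrix.map_apply] at this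
    exact this.symm
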